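/- Let A be the diagonal matrix with distinct eigenvalues λ₁, …, λ_m of multiplicities σ₁, …, σ_m as in the block structure, and assume the multiplicities are ordered σ₁ ≥ σ₂ ≥ … ≥ σ_m > 0. Then there exists a real symmetric positive semidefinite N×N matrix D with rank(D) = σ₁ such that the Kalman rank condition rank(D, AD, …, A^{N−1}D) = N holds. -/

import Mathlib

/-- The Kalman matrix `(D, AD, A²D, …, A^{M−1}D)` of a pair of square matrices,
viewed as a matrix indexed by `n × (Fin M × n)` whose `(i, (k, j))` entry is
`(A^k * D) i j`. -/
def kalmanMatrix {n : Type*} [Fintype n] [DecidableEq n] (M : ℕ)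
    (A D : Matrix n n ℝ) : Matrix n (Fin M × n) ℝ :=
  fun i p => (A ^ (p.1 : ℕ) * D) i p.2

/-- `blockStart σ l = μ_{l-1} = σ₁ + ⋯ + σ_{l-1}`, the index at which block `l` begins
(0-based); block `l` consists of the indices `i` with `blockStart σ l ≤ i < blockStart σ l + σ l`. -/
def blockStart {m : ℕ} (σ : Fin m → ℕ) (l : Fin m) : ℕ :=
  ∑ k ∈ Finset.Iio l, σ k

namespace Stmt3Aux

open Finset

variable {m : ℕ} (σ : Fin m → ℕ)

/-- Partial sums of `σ` as a function on `ℕ`. -/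
def g (t : ℕ) : ℕ := ∑ l ∈ Finset.univ.filter (fun l : Fin m => (l : ℕ) < t), σ l

lemma g_zero : g σ 0 = 0 := by simp [g]

lemma g_succ {t : ℕ} (ht : t < m) : g σ (t + 1) = g σ t + σ ⟨t, ht⟩ := by
  have h : Finset.univ.filter (fun l : Fin m => (l : ℕ) < t + 1)
      = insert (⟨t, ht⟩ : Fin m) (Finset.univ.filter (fun l : Fin m => (l : ℕ) < t)) := by
    ext l
    simp only [Finset.mem_filter, Finset.mem_insert, Finset.mem_univ, true_and, Fin.ext_iff]
    omega
  rw [g, h, Finset.sum_insert (by simp), g, add_comm]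

lemma g_of_le {t : ℕ} (ht : m ≤ t) : g σ t = ∑ l, σ l := by
  rw [g]
  congr 1
  ext l
  simp only [Finset.mem_filter, Finset.mem_univ, true_and, iff_true]
  exact lt_of_lt_of_le l.2 ht

lemma g_mono {t t' : ℕ} (h : t ≤ t') : g σ t ≤ g σ t' := by
  apply Finset.sum_le_sum_of_subset
  intro l
  simp only [Finset.mem_filter, Finset.mem_univ, true_and]
  omega

lemma blockStart_eq (l : Fin m) : blockStart σ l = g σ l := by
  rw [blockStart, g]
  congr 1
  ext k
  simp only [Finset.mem_Iio, Finset.mem_filter, Finset.mem_univ, true_and, Fin.lt_def]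

lemma exists_block (hm : 0 < m) {i : ℕ} (hi : i < ∑ l, σ l) :
    ∃ l : Fin m, g σ l ≤ i ∧ i < g σ l + σ l := by
  classical
  have hex : ∃ t, i < g σ t := ⟨m, by rw [g_of_le σ le_rfl]; exact hi⟩
  have ht : i < g σ (Nat.find hex) := Nat.find_spec hex
  have ht0 : Nat.find hex ≠ 0 := by
    intro h
    rw [h, g_zero] at ht
    omega
  obtain ⟨s, hs⟩ := Nat.exists_eq_succ_of_ne_zero ht0
  rw [hs, Nat.succ_eq_add_one] at ht
  have hsl : ¬ i < g σ s := Nat.find_min hex (by omega)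
  have hsm : s < m := by
    by_contra h
    have h1 : g σ s = ∑ l, σ l := g_of_le σ (by omega)
    omega
  refine ⟨⟨s, hsm⟩, by simpa using hsl, ?_⟩
  have hgs := g_succ σ hsm
  simp only [Fin.val_mk]
  omega

lemma not_lt_block {l l' : Fin m} {i : ℕ} (h2 : i < g σ l + σ l) (h1' : g σ l' ≤ i) :
    ¬ l < l' := by
  intro h
  have h3 : g σ ((l : ℕ) + 1) ≤ g σ l' := g_mono σ h
  rw [g_succ σ l.isLt, Fin.eta] at h3
  omega

lemma block_unique {l l' : Fin m} {i : ℕ} (h1 : g σ l ≤ i) (h2 : i < g σ l + σ l)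
    (h1' : g σ l' ≤ i) (h2' : i < g σ l' + σ l') : l = l' :=
  le_antisymm (not_lt.1 (not_lt_block σ h2' h1)) (not_lt.1 (not_lt_block σ h2 h1'))

end Stmt3Aux

open Matrix in

theorem stmt3 (N m : ℕ) (hm : 0 < m) (lam : Fin m → ℝ) (σ : Fin m → ℕ)
    (hlam : Function.Injective lam) (hσ : ∀ l, 0 < σ l)
    (hmono : ∀ k l : Fin m, k ≤ l → σ l ≤ σ k)
    (hsum : ∑ l, σ l = N)
    (A : Matrix (Fin N) (Fin N) ℝ)
    (hAoff : ∀ i j : Fin N, i ≠ j → A i j = 0)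
    (hAdiag : ∀ (l : Fin m) (i : Fin N),
      blockStart σ l ≤ (i : ℕ) → (i : ℕ) < blockStart σ l + σ l → A i i = lam l) :
    ∃ D : Matrix (Fin N) (Fin N) ℝ, D.IsSymm ∧ D.PosSemidef ∧
      D.rank = σ ⟨0, hm⟩ ∧ (kalmanMatrix N A D).rank = N := by
  classical
  set s0 : ℕ := σ ⟨0, hm⟩ with hs0def
  -- block decomposition
  have exb : ∀ i : Fin N, ∃ l : Fin m,
      Stmt3Aux.g σ l ≤ (i : ℕ) ∧ (i : ℕ) < Stmt3Aux.g σ l + σ l :=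
    fun i => Stmt3Aux.exists_block σ hm (hsum ▸ i.2)
  choose blk hblk1 hblk2 using exb
  set pos : Fin N → ℕ := fun i => (i : ℕ) - Stmt3Aux.g σ (blk i) with hposdef
  have hpos_lt : ∀ i, pos i < σ (blk i) := by
    intro i
    have h1 := hblk1 i
    have h2 := hblk2 i
    simp only [hposdef]
    omega
  have hposs0 : ∀ i, pos i < s0 := fun i =>
    lt_of_lt_of_le (hpos_lt i) (hmono ⟨0, hm⟩ (blk i) (by simp [Fin.le_def]))
  have hinj : ∀ i j : Fin N, blk i = blk j → pos i = pos j → i = j := by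
    intro i j hb hp
    have h1 := hblk1 i
    have h2 := hblk1 j
    rw [hb] at h1
    simp only [hposdef] at hp
    rw [hb] at hp
    exact Fin.ext (by omega)
  -- A is diagonal with entries lam (blk i)
  set d : Fin N → ℝ := fun i => lam (blk i) with hddef
  have hA : A = Matrix.diagonal d := by
    ext i j
    by_cases h : i = j
    · subst h
      simp only [Matrix.diagonal_apply_eq, hddef]
      exact hAdiag (blk i) i (by rw [Stmt3Aux.blockStart_eq]; exact hblk1 i)
        (by rw [Stmt3Aux.blockStart_eq]; exact hblk2 i)
    · rw [Matrix.diagonal_apply_ne _ h]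
      exact hAoff i j h
  have hmN : m ≤ N := by
    calc m = ∑ _l : Fin m, 1 := by simp
    _ ≤ ∑ l, σ l := Finset.sum_le_sum (fun l _ => hσ l)
    _ = N := hsum
  have hs0N : s0 ≤ N := by
    rw [← hsum]
    exact Finset.single_le_sum (fun l _ => Nat.zero_le (σ l)) (Finset.mem_univ _)
  have hN0 : 0 < N := lt_of_lt_of_le hm hmN
  -- the matrix D and its factorization
  set W : Matrix (Fin N) (Fin s0) ℝ := fun i r => if pos i = (r : ℕ) then 1 else 0 with hWdef
  set D : Matrix (Fin N) (Fin N) ℝ := fun i j => if pos i = pos j then 1 else 0 with hDdef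
  have hDW : D = W * Wᵀ := by
    ext i j
    rw [Matrix.mul_apply]
    rw [Finset.sum_eq_single (⟨pos i, hposs0 i⟩ : Fin s0)]
    · rw [Matrix.transpose_apply]
      simp only [hWdef, hDdef, Matrix.transpose_apply]
      simp [eq_comm]
    · intro r _ hr
      simp only [hWdef, Matrix.transpose_apply]
      rw [if_neg, zero_mul]
      intro h
      exact hr (Fin.ext h.symm)
    · intro h
      exact absurd (Finset.mem_univ _) h
  have hWH : Wᴴ = Wᵀ := by
    ext r i
    simp [Matrix.conjTranspose_apply]
  have hsym : D.IsSymm := by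
    ext i j
    simp only [Matrix.transpose_apply, hDdef]
    exact if_congr eq_comm rfl rfl
  have hpsd : D.PosSemidef := by
    rw [hDW, ← hWH]
    exact Matrix.posSemidef_self_mul_conjTranspose W
  -- rank of D
  have hrankD : D.rank = s0 := by
    have hWrank : W.rank = s0 := by
      apply le_antisymm
      · simpa using W.rank_le_card_width
      · set c : Fin s0 → ℝ :=
          fun r => ((Finset.univ.filter (fun i : Fin N => pos i = (r : ℕ))).card : ℝ) with hcdef
        have hWW : Wᵀ * W = Matrix.diagonal c := by
          ext r r'
          rw [Matrix.mul_apply]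
          by_cases h : r = r'
          · subst h
            simp only [Matrix.transpose_apply]
            simp only [Matrix.diagonal_apply_eq, hcdef, Matrix.transpose_apply, hWdef]
            rw [← Finset.sum_boole]
            apply Finset.sum_congr rfl
            intro i _
            by_cases hi : pos i = (r : ℕ) <;> simp [hi]
          · rw [Matrix.diagonal_apply_ne _ h]
            apply Finset.sum_eq_zero
            intro i _
            rw [Matrix.transpose_apply]
            simp only [Matrix.transpose_apply, hWdef]
            rcases eq_or_ne (pos i) ((r : Fin s0) : ℕ) with hi | hi
            · rw [if_neg (fun h' : pos i = ((r' : Fin s0) : ℕ) => h (Fin.ext (by omega))),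
                mul_zero]
            · rw [if_neg hi, zero_mul]
        have hc : ∀ r, c r ≠ 0 := by
          intro r
          have : (⟨(r : ℕ), lt_of_lt_of_le r.2 hs0N⟩ : Fin N) ∈
              Finset.univ.filter (fun i : Fin N => pos i = (r : ℕ)) := by
            set i0 : Fin N := ⟨(r : ℕ), lt_of_lt_of_le r.2 hs0N⟩ with hi0
            have hb : blk i0 = ⟨0, hm⟩ := by
              apply Stmt3Aux.block_unique σ (hblk1 i0) (hblk2 i0)
              · simp [Stmt3Aux.g, hi0]
              · simp [Stmt3Aux.g, hi0]
                exact r.2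
            have hg0 : Stmt3Aux.g σ ((⟨0, hm⟩ : Fin m) : ℕ) = 0 := by
              simp [Stmt3Aux.g]
            simp only [Finset.mem_filter, Finset.mem_univ, true_and, hposdef]
            rw [hb, hg0, hi0]
            simp
          simp only [hcdef, ne_eq, Nat.cast_eq_zero, Finset.card_eq_zero]
          intro h
          rw [h] at this
          exact absurd this (Finset.notMem_empty _)
        have h1 : (Wᵀ * W).rank = s0 := by
          rw [hWW, Matrix.rank_diagonal]
          rw [Fintype.card_subtype]
          rw [Finset.filter_true_of_mem (fun r _ => hc r)]
          simp
        calc s0 = (Wᵀ * W).rank := h1.symm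
        _ ≤ W.rank := Matrix.rank_mul_le_right _ _
    rw [hDW, ← hWH, Matrix.rank_self_mul_conjTranspose, hWrank]
  refine ⟨D, hsym, hpsd, hrankD, ?_⟩
  -- Kalman rank
  set K := kalmanMatrix N A D with hKdef
  have hrange : LinearMap.range K.mulVecLin = ⊤ := by
    rw [← top_le_iff, ← (Pi.basisFun ℝ (Fin N)).span_eq, Submodule.span_le]
    rintro - ⟨i, rfl⟩
    set p : Polynomial ℝ := Lagrange.basis Finset.univ lam (blk i) with hpdef
    have hinjOn : Set.InjOn lam ↑(Finset.univ : Finset (Fin m)) := fun a _ b _ h => hlam h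
    have hdeg : p.natDegree < N := by
      rw [hpdef, Lagrange.natDegree_basis hinjOn (Finset.mem_univ _)]
      simp only [Finset.card_univ, Fintype.card_fin]
      omega
    refine ⟨fun q => if q.2 = i then p.coeff (q.1 : ℕ) else 0, ?_⟩
    funext i'
    rw [Matrix.mulVecLin_apply, Matrix.mulVec, dotProduct, Fintype.sum_prod_type]
    have hterm : ∀ k : Fin N,
        (∑ j : Fin N, K i' (k, j) * (if j = i then p.coeff (k : ℕ) else 0))
          = p.coeff (k : ℕ) * d i' ^ (k : ℕ) * D i' i := by
      intro k
      rw [Finset.sum_eq_single i]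
      · rw [if_pos rfl, hKdef, kalmanMatrix, hA, Matrix.diagonal_pow,
          Matrix.diagonal_mul]
        have hpi : (d ^ (k : ℕ)) i' = d i' ^ (k : ℕ) := rfl
        rw [hpi]
        ring
      · intro j _ hj
        rw [if_neg hj, mul_zero]
      · intro h
        exact absurd (Finset.mem_univ _) h
    rw [Finset.sum_congr rfl (fun k _ => hterm k)]
    rw [← Finset.sum_mul]
    have hsum2 : (∑ k : Fin N, p.coeff (k : ℕ) * d i' ^ (k : ℕ)) = p.eval (d i') := by
      rw [Polynomial.eval_eq_sum_range' hdeg,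
        ← Fin.sum_univ_eq_sum_range (fun k => p.coeff k * d i' ^ k) N]
    rw [hsum2]
    have heval : p.eval (d i') = if blk i' = blk i then 1 else 0 := by
      by_cases h : blk i' = blk i
      · rw [if_pos h, hddef]
        simp only [hddef, h]
        exact Lagrange.eval_basis_self hinjOn (Finset.mem_univ _)
      · rw [if_neg h, hddef]
        exact Lagrange.eval_basis_of_ne (fun hh => h hh.symm) (Finset.mem_univ _)
    rw [heval]
    have : Pi.basisFun ℝ (Fin N) i i' = if i' = i then (1:ℝ) else 0 := by
      simp [Pi.basisFun_apply, Pi.single_apply]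
    rw [this]
    simp only [hDdef]
    by_cases hb : blk i' = blk i
    · by_cases hp : pos i' = pos i
      · rw [if_pos hb, if_pos hp, if_pos (hinj i' i hb hp)]
        norm_num
      · rw [if_pos hb, if_neg hp, if_neg (fun h => hp (congrArg pos h))]
        norm_num
    · rw [if_neg hb, if_neg (fun h : i' = i => hb (congrArg blk h))]
      norm_num
  have hle : K.rank ≤ N := by simpa using K.rank_le_card_height
  rw [Matrix.rank, hrange, finrank_top]
  simp
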